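/- Suppose V_** ≥ 0 under the treadmilling conditions (V_* > 0, V_** < V_*). Then as η → ∞, ν(η) → 1 and V_0(η) = V_** + W(ν(η))/b_1 → V_**; moreover η(ν(η) − 1) → (V_* − V_**)/V_** when V_** > 0. -/

import Mathlib

/-- Large bead, V_** ≥ 0: ν(η) → 1, V_0(η) → V_**, and if V_** > 0 then
η(ν(η) − 1) → (V_* − V_**)/V_**. -/
theorem stmt15 (Vs Vss b1 : ℝ) (hVs : 0 < Vs) (hVss : Vss < Vs)
    (hVss0 : 0 ≤ Vss) (hb1 : 0 < b1)
    (W : ℝ → ℝ) (hWc : ContinuousOn W (Set.Ici 1))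
    (hWmono : StrictMonoOn W (Set.Ici 1)) (hW1 : W 1 = 0)
    (hWinf : Filter.Tendsto W Filter.atTop Filter.atTop)
    (ν : ℝ → ℝ)
    (hν1 : ∀ η : ℝ, 0 ≤ η → 1 < ν η)
    (heq : ∀ η : ℝ, 0 ≤ η →
      Vs / (1 + η * (1 - 1 / ν η)) = Vss + W (ν η) / b1) :
    Filter.Tendsto ν Filter.atTop (nhds 1) ∧
      Filter.Tendsto (fun η => Vss + W (ν η) / b1) Filter.atTop (nhds Vss) ∧
      (0 < Vss → Filter.Tendsto (fun η => η * (ν η - 1)) Filter.atTop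
        (nhds ((Vs - Vss) / Vss))) := by
  have hA : Filter.Tendsto ν Filter.atTop (nhds 1) := by
    rw [tendsto_order]
    constructor
    · intro a ha
      filter_upwards [Filter.eventually_ge_atTop (0:ℝ)] with η hη
      exact lt_trans ha (hν1 η hη)
    · intro a ha
      have ha0 : (0:ℝ) < a := lt_trans one_pos ha
      set c : ℝ := 1 - 1/a with hcdef
      clear_value c
      have hc0 : 0 < c := by
        have h1 : 1/a < 1 := by rw [div_lt_one ha0]; exact ha
        simp only [hcdef]; linarith
      have hWa : 0 < W a := by
        have := hWmono Set.self_mem_Ici (Set.mem_Ici.mpr (le_of_lt ha)) ha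
        rwa [hW1] at this
      set K : ℝ := Vss + W a / b1 with hKdef
      clear_value K
      have hK0 : 0 < K := by
        have : 0 < W a / b1 := div_pos hWa hb1
        simp only [hKdef]; linarith
      filter_upwards [Filter.eventually_ge_atTop (max 0 (Vs/(c*K)+1))] with η hη
      have hη0 : 0 ≤ η := le_trans (le_max_left _ _) hη
      have hη1 : Vs/(c*K) < η :=
        lt_of_lt_of_le (by linarith [le_max_right (0:ℝ) (Vs/(c*K)+1)]) hη
      by_contra h
      push_neg at h
      have hνη : 1 < ν η := hν1 η hη0
      have hνpos : 0 < ν η := lt_trans one_pos hνη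
      have hinv : 1/(ν η) ≤ 1/a := one_div_le_one_div_of_le ha0 h
      have hc1 : c ≤ 1 - 1/(ν η) := by simp only [hcdef]; linarith
      have hDpos : (0:ℝ) < 1 + η * c := by nlinarith
      have hDpos2 : (0:ℝ) < 1 + η * (1 - 1/ν η) := by
        have := mul_le_mul_of_nonneg_left hc1 hη0
        linarith
      have hle1 : Vs / (1 + η * (1 - 1/ν η)) ≤ Vs / (1 + η * c) := by
        apply div_le_div_of_nonneg_left (le_of_lt hVs) hDpos
        nlinarith
      have hlt : Vs / (1 + η * c) < K := by
        rw [div_lt_iff₀ hDpos]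
        have hVc : Vs < η * (c * K) := by
          rw [div_lt_iff₀ (by positivity)] at hη1
          linarith
        nlinarith
      have hge : K ≤ Vss + W (ν η) / b1 := by
        have hW : W a ≤ W (ν η) :=
          hWmono.monotoneOn (Set.mem_Ici.mpr (le_of_lt ha))
            (Set.mem_Ici.mpr (le_of_lt hνη)) h
        have hdiv : W a / b1 ≤ W (ν η) / b1 :=
          by gcongr
        simp only [hKdef]; linarith
      have := heq η hη0
      linarith
  have hmem : ∀ᶠ η in Filter.atTop, ν η ∈ Set.Ici (1:ℝ) := by
    filter_upwards [Filter.eventually_ge_atTop (0:ℝ)] with η hη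
    exact Set.mem_Ici.mpr (le_of_lt (hν1 η hη))
  have hWt : Filter.Tendsto (fun η => W (ν η)) Filter.atTop (nhds 0) := by
    have hcw : ContinuousWithinAt W (Set.Ici 1) 1 := hWc 1 Set.self_mem_Ici
    have hν : Filter.Tendsto ν Filter.atTop (nhdsWithin 1 (Set.Ici 1)) :=
      tendsto_nhdsWithin_iff.mpr ⟨hA, hmem⟩
    simpa [hW1, Function.comp_def] using hcw.tendsto.comp hν
  have hB : Filter.Tendsto (fun η => Vss + W (ν η) / b1) Filter.atTop (nhds Vss) := by
    have := Filter.Tendsto.add (tendsto_const_nhds (x := Vss) (f := Filter.atTop))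
      (hWt.div_const b1)
    simpa using this
  refine ⟨hA, hB, ?_⟩
  intro hVss'
  have hLHS : Filter.Tendsto (fun η => Vs / (1 + η * (1 - 1/ν η))) Filter.atTop (nhds Vss) := by
    refine hB.congr' ?_
    filter_upwards [Filter.eventually_ge_atTop (0:ℝ)] with η hη
    exact (heq η hη).symm
  have hD1 : ∀ᶠ η in Filter.atTop, (1:ℝ) ≤ 1 + η * (1 - 1/ν η) := by
    filter_upwards [Filter.eventually_ge_atTop (0:ℝ)] with η hη
    have hνη := hν1 η hη
    have : 1/(ν η) < 1 := by rw [div_lt_one (lt_trans one_pos hνη)]; exact hνη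
    nlinarith
  have hDt : Filter.Tendsto (fun η => 1 + η * (1 - 1/ν η)) Filter.atTop (nhds (Vs/Vss)) := by
    have h2 : Filter.Tendsto (fun η => Vs / (Vs / (1 + η * (1 - 1/ν η)))) Filter.atTop
        (nhds (Vs / Vss)) := tendsto_const_nhds.div hLHS (ne_of_gt hVss')
    refine h2.congr' ?_
    filter_upwards [hD1] with η hη
    have hDpos : (0:ℝ) < 1 + η * (1 - 1/ν η) := by linarith
    rw [eq_comm]
    field_simp
  have hη1 : Filter.Tendsto (fun η => η * (1 - 1/ν η)) Filter.atTop (nhds (Vs/Vss - 1)) := by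
    have := hDt.sub_const 1
    simpa using this
  have hfin := hA.mul hη1
  have heqfun : ∀ᶠ η in Filter.atTop,
      ν η * (η * (1 - 1/ν η)) = η * (ν η - 1) := by
    filter_upwards [Filter.eventually_ge_atTop (0:ℝ)] with η hη
    have hνpos : 0 < ν η := lt_trans one_pos (hν1 η hη)
    field_simp
  have := hfin.congr' heqfun
  have hval : 1 * (Vs/Vss - 1) = (Vs - Vss) / Vss := by
    field_simp
  rwa [hval] at this
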